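/- Fix ε, t, Δ > 0 and define for α ∈ (0, √(2t/Δ − 1)) the function B(α) = 1 − [Φ(√(ε/2)(α + 1/α)) − Φ(√(ε/2)(−α + 1/α))] / (2Φ(t√(2ε)/(αΔ)) − 1), where Φ is the standard normal CDF. Then B is strictly decreasing on (0, √(2t/Δ − 1)). -/

import Mathlib

open Real MeasureTheory Set
set_option linter.unusedVariables false

/-- Standard normal CDF. -/
noncomputable def Phi (x : ℝ) : ℝ :=
  ∫ u in Set.Iic x, Real.exp (-(u ^ 2) / 2) / Real.sqrt (2 * π)

noncomputable def gpdf (x : ℝ) : ℝ := Real.exp (-(x ^ 2) / 2) / Real.sqrt (2 * π)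

lemma gpdf_pos (x : ℝ) : 0 < gpdf x := by unfold gpdf; positivity

lemma gpdf_cont : Continuous gpdf := by unfold gpdf; fun_prop

lemma gpdf_integrable : Integrable gpdf := by
  have h : Integrable (fun x : ℝ => Real.exp (-(1/2) * x ^ 2)) :=
    integrable_exp_neg_mul_sq (by norm_num)
  have := h.div_const (Real.sqrt (2 * π))
  have heq : gpdf = fun x : ℝ => Real.exp (-(1/2) * x ^ 2) / Real.sqrt (2 * π) := by
    funext x; unfold gpdf; ring_nf
  rw [heq]; exact this

lemma gpdf_even (x : ℝ) : gpdf (-x) = gpdf x := by unfold gpdf; rw [neg_pow]; ring_nf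

lemma gpdf_le {a b : ℝ} (h : a ^ 2 ≤ b ^ 2) : gpdf b ≤ gpdf a := by
  unfold gpdf
  have h2 : Real.exp (-(b ^ 2) / 2) ≤ Real.exp (-(a ^ 2) / 2) :=
    Real.exp_le_exp.2 (by linarith)
  gcongr

lemma Phi_eq (x : ℝ) : Phi x = ∫ u in Set.Iic x, gpdf u := rfl

lemma Phi_sub (a b : ℝ) : Phi b - Phi a = ∫ x in a..b, gpdf x := by
  rw [Phi_eq, Phi_eq]
  exact intervalIntegral.integral_Iic_sub_Iic gpdf_integrable.integrableOn
    gpdf_integrable.integrableOn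

lemma hasDerivAt_Phi (x : ℝ) : HasDerivAt Phi (gpdf x) x := by
  have h : ∀ y, Phi y = Phi 0 + ∫ u in (0:ℝ)..y, gpdf u := by
    intro y; rw [← Phi_sub]; ring
  have h2 := ((gpdf_cont.integral_hasStrictDerivAt 0 x).hasDerivAt).const_add (Phi 0)
  have hfun : Phi = fun y => Phi 0 + ∫ u in (0:ℝ)..y, gpdf u := funext h
  rw [hfun]; exact h2

lemma Phi_strictMono : StrictMono Phi := by
  intro a b hab
  have h : 0 < ∫ x in a..b, gpdf x :=
    intervalIntegral.intervalIntegral_pos_of_pos gpdf_integrable.intervalIntegrable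
      gpdf_pos hab
  linarith [Phi_sub a b]

lemma Phi_zero : Phi 0 = 1 / 2 := by
  have htot : (∫ x : ℝ, gpdf x) = 1 := by
    have heq : gpdf = fun x : ℝ => Real.exp (-(1/2) * x ^ 2) / Real.sqrt (2 * π) := by
      funext x; unfold gpdf; ring_nf
    rw [heq, MeasureTheory.integral_div, integral_gaussian]
    rw [show π / (1/2 : ℝ) = 2 * π by ring]
    exact div_self (Real.sqrt_ne_zero'.2 (by positivity))
  have hsym : (∫ x in Iic (0:ℝ), gpdf x) = ∫ x in Ioi (0:ℝ), gpdf x := by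
    have := integral_comp_neg_Iic (0:ℝ) gpdf
    simp only [neg_zero] at this
    rw [← this]
    exact setIntegral_congr_fun measurableSet_Iic fun x _ => (gpdf_even x).symm
  have hsplit : (∫ x in Iic (0:ℝ), gpdf x) + (∫ x in Ioi (0:ℝ), gpdf x) = ∫ x : ℝ, gpdf x :=
    intervalIntegral.integral_Iic_add_Ioi gpdf_integrable.integrableOn gpdf_integrable.integrableOn
  have : Phi 0 = ∫ x in Iic (0:ℝ), gpdf x := Phi_eq 0
  linarith

lemma half_lt_Phi {x : ℝ} (hx : 0 < x) : 1 / 2 < Phi x := by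
  rw [← Phi_zero]; exact Phi_strictMono hx

lemma hasDerivAt_N (c : ℝ) {x : ℝ} (hx : 0 < x) :
    HasDerivAt (fun α : ℝ => Phi (c * (α + 1 / α)) - Phi (c * (-α + 1 / α)))
      (gpdf (c * (x + 1 / x)) * (c * (1 + -(x ^ 2)⁻¹))
        - gpdf (c * (-x + 1 / x)) * (c * (-1 + -(x ^ 2)⁻¹))) x := by
  have hne : x ≠ 0 := hx.ne'
  have hinv : HasDerivAt (fun y : ℝ => 1 / y) (-(x ^ 2)⁻¹) x := by
    simpa [one_div] using hasDerivAt_inv hne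
  have h1 : HasDerivAt (fun y : ℝ => y + 1 / y) (1 + -(x ^ 2)⁻¹) x :=
    (hasDerivAt_id x).add hinv
  have h2 : HasDerivAt (fun y : ℝ => -y + 1 / y) (-1 + -(x ^ 2)⁻¹) x :=
    ((hasDerivAt_id x).neg).add hinv
  have hu := h1.const_mul c
  have hv := h2.const_mul c
  have hU := (hasDerivAt_Phi (c * (x + 1 / x))).comp x hu
  have hV := (hasDerivAt_Phi (c * (-x + 1 / x))).comp x hv
  exact hU.sub hV

lemma N_strictMonoOn {c : ℝ} (hc : 0 < c) :
    StrictMonoOn (fun α : ℝ => Phi (c * (α + 1 / α)) - Phi (c * (-α + 1 / α))) (Ioi 0) := by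
  apply strictMonoOn_of_deriv_pos (convex_Ioi 0)
  · intro x hx
    exact ((hasDerivAt_N c hx).continuousAt).continuousWithinAt
  · intro x hx
    rw [interior_Ioi] at hx
    rw [(hasDerivAt_N c hx).deriv]
    have hx' : (0:ℝ) < x := hx
    set fa := gpdf (c * (x + 1 / x)) with hfa_def
    set fb := gpdf (c * (-x + 1 / x)) with hfb_def
    have hfa : 0 < fa := gpdf_pos _
    have hfb : 0 < fb := gpdf_pos _
    have hab : fa ≤ fb := by
      apply gpdf_le
      have h1 : x * (1 / x) = 1 := mul_one_div_cancel hx'.ne'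
      nlinarith [sq_nonneg c, sq_nonneg (c * x)]
    have hs : 0 < (x ^ 2)⁻¹ := by positivity
    set s := (x ^ 2)⁻¹
    have key : fa * (c * (1 + -s)) - fb * (c * (-1 + -s))
        = c * (2 * fa + (1 + s) * (fb - fa)) := by ring
    rw [key]
    have h1 : 0 ≤ (1 + s) * (fb - fa) := mul_nonneg (by linarith) (by linarith)
    positivity

/-- The failure-probability function `B(α)` of the truncated Gaussian mechanism
is strictly decreasing on `(0, √(2t/Δ − 1))`. -/
theorem B_strictAntiOn (ε t Δ : ℝ) (hε : 0 < ε) (ht : 0 < t) (hΔ : 0 < Δ)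
    (htΔ : Δ / 2 < t) :
    StrictAntiOn
      (fun α : ℝ =>
        1 - (Phi (Real.sqrt (ε / 2) * (α + 1 / α))
              - Phi (Real.sqrt (ε / 2) * (-α + 1 / α)))
            / (2 * Phi (t * Real.sqrt (2 * ε) / (α * Δ)) - 1))
      (Set.Ioo 0 (Real.sqrt (2 * t / Δ - 1))) := by
  intro a ha b hb hab
  have ha0 : 0 < a := ha.1
  have hb0 : 0 < b := hb.1
  have hc : 0 < Real.sqrt (ε / 2) := Real.sqrt_pos.2 (by positivity)
  set c := Real.sqrt (ε / 2) with hc_def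
  have hN := N_strictMonoOn hc (mem_Ioi.2 ha0) (mem_Ioi.2 hb0) hab
  simp only at hN
  have ha1 : a * (1 / a) = 1 := mul_one_div_cancel ha0.ne'
  have hNa_pos : 0 < Phi (c * (a + 1 / a)) - Phi (c * (-a + 1 / a)) := by
    have harg : c * (-a + 1 / a) < c * (a + 1 / a) := by nlinarith
    linarith [Phi_strictMono harg]
  have hK : 0 < t * Real.sqrt (2 * ε) := by positivity
  have hargb : 0 < t * Real.sqrt (2 * ε) / (b * Δ) := by positivity
  have hDb_pos : 0 < 2 * Phi (t * Real.sqrt (2 * ε) / (b * Δ)) - 1 := by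
    linarith [half_lt_Phi hargb]
  have hargab : t * Real.sqrt (2 * ε) / (b * Δ) < t * Real.sqrt (2 * ε) / (a * Δ) :=
    div_lt_div_of_pos_left hK (by positivity) (by nlinarith)
  have hD : 2 * Phi (t * Real.sqrt (2 * ε) / (b * Δ)) - 1
      < 2 * Phi (t * Real.sqrt (2 * ε) / (a * Δ)) - 1 := by
    linarith [Phi_strictMono hargab]
  simp only
  have key : (Phi (c * (a + 1 / a)) - Phi (c * (-a + 1 / a)))
        / (2 * Phi (t * Real.sqrt (2 * ε) / (a * Δ)) - 1)
      < (Phi (c * (b + 1 / b)) - Phi (c * (-b + 1 / b)))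
        / (2 * Phi (t * Real.sqrt (2 * ε) / (b * Δ)) - 1) := by
    rw [div_lt_div_iff₀ (by linarith) hDb_pos]
    nlinarith [mul_lt_mul_of_pos_right hN hDb_pos,
      mul_lt_mul_of_pos_left hD (show 0 < Phi (c * (b + 1 / b)) - Phi (c * (-b + 1 / b)) by linarith)]
  linarith
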